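/- arXiv:0812.5039 — 2 statements merged into one kernel-verified Lean document; each statement's English description precedes it below -/
import Mathlib

section
/- Let d ≥ 1 be an integer and let P, Q ⊂ ℝ^d be finite point sets that do not share any coordinate, with |P| = s and |Q| = t. If s + t < d + 2, then sconv(P) ∩ sconv(Q) = ∅. -/
noncomputable def stairPath : (d : ℕ) → (Fin d → ℝ) → (Fin d → ℝ) → Set (Fin d → ℝ)
  | 0, _, _ => Set.univ
  | (d+1), a, b =>
    if a (Fin.last d) ≤ b (Fin.last d) then
      segment ℝ a (Fin.snoc (Fin.init a) (b (Fin.last d))) ∪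
        (fun z => Fin.snoc z (b (Fin.last d))) '' stairPath d (Fin.init a) (Fin.init b)
    else
      segment ℝ b (Fin.snoc (Fin.init b) (a (Fin.last d))) ∪
        (fun z => Fin.snoc z (a (Fin.last d))) '' stairPath d (Fin.init b) (Fin.init a)

def StairConvex {d : ℕ} (S : Set (Fin d → ℝ)) : Prop :=
  ∀ a ∈ S, ∀ b ∈ S, stairPath d a b ⊆ S

/-- The stair-convex hull: the intersection of all stair-convex sets containing `X`. -/
def sconv {d : ℕ} (X : Set (Fin d → ℝ)) : Set (Fin d → ℝ) :=
  ⋂₀ {S : Set (Fin d → ℝ) | StairConvex S ∧ X ⊆ S}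

lemma subset_sconv {d : ℕ} (X : Set (Fin d → ℝ)) : X ⊆ sconv X :=
  fun _ hx => Set.mem_sInter.2 fun _ hS => hS.2 hx

lemma sconv_subset {d : ℕ} {X S : Set (Fin d → ℝ)} (hS : StairConvex S) (hXS : X ⊆ S) :
    sconv X ⊆ S :=
  Set.sInter_subset_of_mem ⟨hS, hXS⟩

lemma stairConvex_sconv {d : ℕ} (X : Set (Fin d → ℝ)) : StairConvex (sconv X) :=
  fun a ha b hb x hx => Set.mem_sInter.2 fun S hS =>
    hS.1 a (Set.mem_sInter.1 ha S hS) b (Set.mem_sInter.1 hb S hS) hx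

lemma stairConvex_empty {d : ℕ} : StairConvex (∅ : Set (Fin d → ℝ)) :=
  fun a ha => absurd ha (Set.notMem_empty a)

lemma sconv_empty {d : ℕ} : sconv (∅ : Set (Fin d → ℝ)) = ∅ :=
  Set.subset_empty_iff.1 (sconv_subset stairConvex_empty subset_rfl)

lemma stairPath_self {d : ℕ} (p : Fin d → ℝ) : stairPath d p p ⊆ {p} := by
  induction d with
  | zero =>
    intro x _
    exact Set.mem_singleton_iff.2 (funext fun i => i.elim0)
  | succ d ih =>
    rw [stairPath, if_pos le_rfl]
    rintro x (hx | ⟨z, hz, rfl⟩)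
    · rw [Fin.snoc_init_self, segment_same] at hx
      exact hx
    · have hzp : z = Fin.init p := ih (Fin.init p) hz
      subst hzp
      simp [Fin.snoc_init_self]

lemma stairConvex_singleton {d : ℕ} (p : Fin d → ℝ) : StairConvex ({p} : Set (Fin d → ℝ)) := by
  intro a ha b hb
  rw [Set.mem_singleton_iff] at ha hb
  subst ha; subst hb
  exact stairPath_self _

lemma combo_lt {A B u v c : ℝ} (hu : 0 ≤ u) (hv : 0 ≤ v) (huv : u + v = 1)
    (hA : A < c) (hB : B < c) : u * A + v * B < c := by
  have hc : u * c + v * c = c := by linear_combination c * huv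
  rcases eq_or_lt_of_le hu with rfl | h
  · have hv1 : v = 1 := by linarith
    subst hv1
    simpa using hB
  · have h2 : v * B ≤ v * c := mul_le_mul_of_nonneg_left hB.le hv
    have h1 : u * A < u * c := (mul_lt_mul_iff_right₀ h).2 hA
    linarith

lemma halflt_aux {d : ℕ} {c : ℝ} (a b : Fin (d+1) → ℝ)
    (hab : a (Fin.last d) ≤ b (Fin.last d))
    (ha : a (Fin.last d) < c) (hb : b (Fin.last d) < c) :
    (segment ℝ a (Fin.snoc (Fin.init a) (b (Fin.last d))) ∪
      (fun z => Fin.snoc z (b (Fin.last d))) '' stairPath d (Fin.init a) (Fin.init b))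
      ⊆ {x | x (Fin.last d) < c} := by
  rintro x (⟨u, v, hu, hv, huv, rfl⟩ | ⟨z, hz, rfl⟩)
  · show (u • a + v • Fin.snoc (Fin.init a) (b (Fin.last d))) (Fin.last d) < c
    simp only [Pi.add_apply, Pi.smul_apply, smul_eq_mul, Fin.snoc_last]
    exact combo_lt hu hv huv ha hb
  · simpa using hb

lemma stairConvex_halflt {d : ℕ} {c : ℝ} :
    StairConvex {x : Fin (d+1) → ℝ | x (Fin.last d) < c} := by
  intro a ha b hb
  rw [stairPath]
  split_ifs with h
  · exact halflt_aux a b h ha hb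
  · exact halflt_aux b a (le_of_not_ge h) hb ha

lemma key_aux {d : ℕ} {M : ℝ} {S' : Set (Fin d → ℝ)} (hS' : StairConvex S')
    (a b : Fin (d+1) → ℝ) (hab : a (Fin.last d) ≤ b (Fin.last d))
    (ha : a (Fin.last d) < M → Fin.init a ∈ S')
    (hb : b (Fin.last d) < M → Fin.init b ∈ S') :
    (segment ℝ a (Fin.snoc (Fin.init a) (b (Fin.last d))) ∪
      (fun z => Fin.snoc z (b (Fin.last d))) '' stairPath d (Fin.init a) (Fin.init b))
      ⊆ {x | x (Fin.last d) < M → Fin.init x ∈ S'} := by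
  rintro x (⟨u, v, hu, hv, huv, rfl⟩ | ⟨z, hz, rfl⟩) <;> intro hxM
  · have hlast : (u • a + v • Fin.snoc (Fin.init a) (b (Fin.last d))) (Fin.last d)
        = u * a (Fin.last d) + v * b (Fin.last d) := by
      simp [Fin.snoc_last, smul_eq_mul]
    rw [hlast] at hxM
    have haM : a (Fin.last d) < M := by
      have hA : u * a (Fin.last d) + v * a (Fin.last d) = a (Fin.last d) := by
        linear_combination (a (Fin.last d)) * huv
      have hv' := mul_le_mul_of_nonneg_left hab hv
      linarith
    have hinit : Fin.init (u • a + v • Fin.snoc (Fin.init a) (b (Fin.last d))) = Fin.init a := by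
      funext i
      show (u • a + v • Fin.snoc (Fin.init a) (b (Fin.last d))) i.castSucc = a i.castSucc
      simp only [Pi.add_apply, Pi.smul_apply, smul_eq_mul, Fin.snoc_castSucc]
      show u * a i.castSucc + v * Fin.init a i = a i.castSucc
      show u * a i.castSucc + v * a i.castSucc = a i.castSucc
      linear_combination (a i.castSucc) * huv
    rw [hinit]
    exact ha haM
  · have hbM : b (Fin.last d) < M := by simpa using hxM
    rw [Fin.init_snoc]
    exact hS' _ (ha (lt_of_le_of_lt hab hbM)) _ (hb hbM) hz

lemma stairConvex_key {d : ℕ} {M : ℝ} {S' : Set (Fin d → ℝ)} (hS' : StairConvex S') :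
    StairConvex {x : Fin (d+1) → ℝ | x (Fin.last d) < M → Fin.init x ∈ S'} := by
  intro a ha b hb
  rw [stairPath]
  split_ifs with h
  · exact key_aux hS' a b h ha hb
  · exact key_aux hS' b a (le_of_not_ge h) hb ha

lemma step_lemma (d : ℕ)
    (hIH : ∀ P Q : Finset (Fin d → ℝ),
      (∀ i : Fin d, ∀ p ∈ P, ∀ q ∈ Q, p i ≠ q i) → P.card + Q.card < d + 2 →
      sconv (↑P : Set (Fin d → ℝ)) ∩ sconv (↑Q : Set (Fin d → ℝ)) = ∅)
    (P Q : Finset (Fin (d+1) → ℝ))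
    (hshare : ∀ i : Fin (d+1), ∀ p ∈ P, ∀ q ∈ Q, p i ≠ q i)
    (hcard : P.card + Q.card < d + 3)
    (r : Fin (d+1) → ℝ) (hrP : r ∈ P)
    (hmaxP : ∀ y ∈ P, y (Fin.last d) ≤ r (Fin.last d))
    (hmaxQ : ∀ q ∈ Q, q (Fin.last d) ≤ r (Fin.last d))
    (x : Fin (d+1) → ℝ) (hxP : x ∈ sconv (↑P : Set (Fin (d+1) → ℝ)))
    (hxQ : x ∈ sconv (↑Q : Set (Fin (d+1) → ℝ))) : False := by
  classical
  set M := r (Fin.last d) with hM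
  have hQlt : ∀ q ∈ Q, q (Fin.last d) < M := fun q hq =>
    lt_of_le_of_ne (hmaxQ q hq) (Ne.symm (hshare (Fin.last d) r hrP q hq))
  -- x has last coordinate < M
  have hxM : x (Fin.last d) < M := by
    have : sconv (↑Q : Set (Fin (d+1) → ℝ)) ⊆ {y | y (Fin.last d) < M} :=
      sconv_subset stairConvex_halflt (fun q hq => hQlt q (Finset.mem_coe.1 hq))
    exact this hxQ
  set P' : Finset (Fin d → ℝ) :=
    (P.filter (fun p => p (Fin.last d) < M)).image Fin.init with hP'
  set Q' : Finset (Fin d → ℝ) :=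
    (Q.filter (fun q => q (Fin.last d) < M)).image Fin.init with hQ'
  have hinit : ∀ (R : Finset (Fin (d+1) → ℝ)), x ∈ sconv (↑R : Set (Fin (d+1) → ℝ)) →
      Fin.init x ∈ sconv (↑((R.filter (fun p => p (Fin.last d) < M)).image Fin.init)
        : Set (Fin d → ℝ)) := by
    intro R hxR
    have hsub : (↑R : Set (Fin (d+1) → ℝ)) ⊆
        {y | y (Fin.last d) < M → Fin.init y ∈
          sconv (↑((R.filter (fun p => p (Fin.last d) < M)).image Fin.init)
            : Set (Fin d → ℝ))} := by
      intro p hp hpM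
      apply subset_sconv
      rw [Finset.mem_coe] at hp ⊢
      exact Finset.mem_image.2 ⟨p, Finset.mem_filter.2 ⟨hp, hpM⟩, rfl⟩
    exact sconv_subset (stairConvex_key (stairConvex_sconv _)) hsub hxR hxM
  have hxP' : Fin.init x ∈ sconv (↑P' : Set (Fin d → ℝ)) := hinit P hxP
  have hxQ' : Fin.init x ∈ sconv (↑Q' : Set (Fin d → ℝ)) := hinit Q hxQ
  -- cardinalities
  have hfil : (P.filter (fun p => p (Fin.last d) < M)).card < P.card := by
    apply Finset.card_lt_card
    refine (Finset.ssubset_iff_of_subset (Finset.filter_subset _ _)).2 ⟨r, hrP, ?_⟩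
    simp [Finset.mem_filter, hM]
  have h1 : P'.card ≤ (P.filter (fun p => p (Fin.last d) < M)).card := Finset.card_image_le
  have h2 : Q'.card ≤ Q.card :=
    le_trans Finset.card_image_le (Finset.card_filter_le _ _)
  -- shared coordinates
  have hshare' : ∀ i : Fin d, ∀ p' ∈ P', ∀ q' ∈ Q', p' i ≠ q' i := by
    intro i p' hp' q' hq'
    obtain ⟨p, hp, rfl⟩ := Finset.mem_image.1 hp'
    obtain ⟨q, hq, rfl⟩ := Finset.mem_image.1 hq'
    exact hshare i.castSucc p (Finset.mem_of_mem_filter p hp) q (Finset.mem_of_mem_filter q hq)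
  have hcard' : P'.card + Q'.card < d + 2 := by
    have h3 : (P.filter (fun p => p (Fin.last d) < M)).card + 1 ≤ P.card :=
      Nat.succ_le_of_lt hfil
    have h4 : P.card + Q.card + 1 ≤ d + 3 := Nat.succ_le_of_lt hcard
    have h5 : P'.card + 1 ≤ P.card := le_trans (Nat.add_le_add_right h1 1) h3
    have h6 : P'.card + 1 + Q'.card ≤ P.card + Q.card := Nat.add_le_add h5 h2
    have h7 : P'.card + Q'.card + 1 ≤ d + 2 := by
      refine le_trans ?_ (Nat.lt_succ_iff.1 hcard)
      calc P'.card + Q'.card + 1 = P'.card + 1 + Q'.card := by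
            rw [Nat.add_right_comm]
        _ ≤ P.card + Q.card := h6
    exact Nat.lt_of_succ_le h7
  have hempty := hIH P' Q' hshare' hcard'
  exact Set.eq_empty_iff_forall_notMem.1 hempty (Fin.init x) ⟨hxP', hxQ'⟩

lemma sconv_disjoint_aux : ∀ d : ℕ, 1 ≤ d → ∀ P Q : Finset (Fin d → ℝ),
    (∀ i : Fin d, ∀ p ∈ P, ∀ q ∈ Q, p i ≠ q i) → P.card + Q.card < d + 2 →
    sconv (↑P : Set (Fin d → ℝ)) ∩ sconv (↑Q : Set (Fin d → ℝ)) = ∅ := by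
  intro d hd
  induction d, hd using Nat.le_induction with
  | base =>
    intro P Q hshare hcard
    rcases P.eq_empty_or_nonempty with rfl | hP
    · simp [sconv_empty]
    rcases Q.eq_empty_or_nonempty with rfl | hQ
    · simp [sconv_empty]
    have hP1 : P.card = 1 := by
      have := hP.card_pos; have := hQ.card_pos; omega
    have hQ1 : Q.card = 1 := by
      have := hP.card_pos; have := hQ.card_pos; omega
    obtain ⟨p, rfl⟩ := Finset.card_eq_one.1 hP1
    obtain ⟨q, rfl⟩ := Finset.card_eq_one.1 hQ1
    have h1 : sconv (↑({p} : Finset (Fin 1 → ℝ)) : Set (Fin 1 → ℝ)) ⊆ {p} := by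
      apply sconv_subset (stairConvex_singleton p)
      simp
    have h2 : sconv (↑({q} : Finset (Fin 1 → ℝ)) : Set (Fin 1 → ℝ)) ⊆ {q} := by
      apply sconv_subset (stairConvex_singleton q)
      simp
    apply Set.eq_empty_iff_forall_notMem.2
    rintro x ⟨hx1, hx2⟩
    have e1 : x = p := h1 hx1
    have e2 : x = q := h2 hx2
    exact hshare 0 p (Finset.mem_singleton_self p) q (Finset.mem_singleton_self q)
      (by rw [← e1, ← e2])
  | succ d hd ih =>
    intro P Q hshare hcard
    rcases P.eq_empty_or_nonempty with rfl | hP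
    · simp [sconv_empty]
    rcases Q.eq_empty_or_nonempty with rfl | hQ
    · simp [sconv_empty]
    apply Set.eq_empty_iff_forall_notMem.2
    rintro x ⟨hxP, hxQ⟩
    obtain ⟨r, hr, hrmax⟩ := Finset.exists_max_image (P ∪ Q) (fun y => y (Fin.last d))
      (Finset.Nonempty.mono Finset.subset_union_left hP)
    rcases Finset.mem_union.1 hr with hrP | hrQ
    · exact step_lemma d ih P Q hshare hcard r hrP
        (fun y hy => hrmax y (Finset.mem_union_left _ hy))
        (fun q hq => hrmax q (Finset.mem_union_right _ hq)) x hxP hxQ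
    · exact step_lemma d ih Q P
        (fun i q hq p hp => (hshare i p hp q hq).symm) (by omega) r hrQ
        (fun y hy => hrmax y (Finset.mem_union_right _ hy))
        (fun p hp => hrmax p (Finset.mem_union_left _ hp)) x hxQ hxP

/-- If `P, Q ⊂ ℝ^d` are finite sets sharing no coordinate and `|P| + |Q| < d + 2`,
then their stair-convex hulls are disjoint. -/
theorem sconv_disjoint_of_few_points (d s t : ℕ) (hd : 1 ≤ d)
    (P Q : Finset (Fin d → ℝ)) (hs : P.card = s) (ht : Q.card = t)
    (hshare : ∀ i : Fin d, ∀ p ∈ P, ∀ q ∈ Q, p i ≠ q i)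
    (hcard : s + t < d + 2) :
    sconv (↑P : Set (Fin d → ℝ)) ∩ sconv (↑Q : Set (Fin d → ℝ)) = ∅ := by
  subst hs; subst ht
  exact sconv_disjoint_aux d hd P Q hshare hcard
end

section
/- Let d ≥ 1 and m ≥ 2 be integers, let S ⊆ [0,1]^d be a stair-convex set, and let δ > 0. Define S^{δ−} = {p ∈ ℝ^d : p + q ∈ S for every q ∈ [0,δ]^d}. Then: (1) S^{δ−} is stair-convex; (2) vol(S^{δ−}) ≥ vol(S) − d·δ, where vol denotes Lebesgue (outer) measure; and (3) |S^{δ−} ∩ Gu(m)| ≥ |S ∩ Gu(m)| − d·⌈(m−1)δ⌉·m^{d−1}. -/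
/-- The erosion `S ⊖ [0,δ]^d = {p : p + q ∈ S for all q ∈ [0,δ]^d}`. -/
def shrink {d : ℕ} (S : Set (Fin d → ℝ)) (δ : ℝ) : Set (Fin d → ℝ) :=
  {p | ∀ q : Fin d → ℝ, (∀ i : Fin d, q i ∈ Set.Icc 0 δ) → p + q ∈ S}

open Classical in
/-- The uniform grid `Gu(m) = {0, 1/(m-1), …, 1}^d` as a finite set. -/
noncomputable def uniformGrid (d m : ℕ) : Finset (Fin d → ℝ) :=
  (Finset.univ : Finset (Fin d → Fin m)).image (fun f i => (f i : ℝ) / (m - 1))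


open scoped ENNReal

lemma stairPath_snoc_mem {d : ℕ} {a b z : Fin d → ℝ} (c : ℝ)
    (hz : z ∈ stairPath d a b) :
    Fin.snoc z c ∈ stairPath (d+1) (Fin.snoc a c) (Fin.snoc b c) := by
  rw [stairPath, if_pos (by simp : _)]
  right
  exact ⟨z, by simpa [Fin.init_snoc, Fin.snoc_last] using hz, by simp [Fin.snoc_last]⟩

lemma segment_add {E : Type*} [AddCommGroup E] [Module ℝ E] {u v x : E} (q : E)
    (h : x ∈ segment ℝ u v) : x + q ∈ segment ℝ (u + q) (v + q) := by
  obtain ⟨α, β, hα, hβ, hαβ, rfl⟩ := h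
  refine ⟨α, β, hα, hβ, hαβ, ?_⟩
  have : α • q + β • q = q := by rw [← add_smul, hαβ, one_smul]
  rw [smul_add, smul_add]
  rw [show α • u + α • q + (β • v + β • q) = α • u + β • v + (α • q + β • q) by abel, this]

lemma init_add {d : ℕ} (a q : Fin (d+1) → ℝ) :
    Fin.init (a + q) = Fin.init a + Fin.init q := rfl

lemma snoc_add {d : ℕ} (z : Fin d → ℝ) (c : ℝ) (q : Fin (d+1) → ℝ) :
    Fin.snoc z c + q = Fin.snoc (z + Fin.init q) (c + q (Fin.last d)) := by
  funext i
  refine Fin.lastCases ?_ (fun i => ?_) i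
  · simp
  · simp [Fin.init]

lemma stairPath_add {d : ℕ} : ∀ {a b x : Fin d → ℝ} (q : Fin d → ℝ),
    x ∈ stairPath d a b → x + q ∈ stairPath d (a + q) (b + q) := by
  induction d with
  | zero => intro a b x q _; trivial
  | succ d ih =>
    intro a b x q hx
    have hlast : ∀ (u v : Fin (d+1) → ℝ), (u + v) (Fin.last d) = u (Fin.last d) + v (Fin.last d) :=
      fun _ _ => rfl
    by_cases h : a (Fin.last d) ≤ b (Fin.last d)
    · rw [stairPath, if_pos h] at hx
      rw [stairPath, if_pos (by rw [hlast, hlast]; linarith)]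
      rcases hx with hx | ⟨z, hz, rfl⟩
      · left
        have := segment_add q hx
        rw [snoc_add] at this
        exact this
      · right
        exact ⟨z + Fin.init q, ih (Fin.init q) hz, (snoc_add z (b (Fin.last d)) q).symm⟩
    · rw [stairPath, if_neg h] at hx
      rw [stairPath, if_neg (by rw [hlast, hlast]; intro hc; exact h (by linarith))]
      rcases hx with hx | ⟨z, hz, rfl⟩
      · left
        have := segment_add q hx
        rw [snoc_add] at this
        exact this
      · right
        exact ⟨z + Fin.init q, ih (Fin.init q) hz, (snoc_add z (a (Fin.last d)) q).symm⟩

lemma stairConvex_pre {d : ℕ} {S : Set (Fin d → ℝ)} (hS : StairConvex S)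
    (P : (Fin d → ℝ) → Prop) : StairConvex {p | ∀ q, P q → p + q ∈ S} := by
  intro a ha b hb x hx q hq
  exact hS _ (ha q hq) _ (hb q hq) (stairPath_add q hx)

lemma stairConvex_slice {d : ℕ} {S : Set (Fin (d+1) → ℝ)} (hS : StairConvex S) (c : ℝ) :
    StairConvex {y : Fin d → ℝ | Fin.snoc y c ∈ S} := by
  intro a ha b hb z hz
  exact hS _ ha _ hb (stairPath_snoc_mem c hz)

lemma update_last_eq_snoc {d : ℕ} (p : Fin (d+1) → ℝ) (t : ℝ) :
    Function.update p (Fin.last d) t = Fin.snoc (Fin.init p) t := by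
  funext i
  refine Fin.lastCases ?_ (fun i => ?_) i
  · simp
  · rw [Function.update_of_ne (Fin.castSucc_lt_last i).ne, Fin.snoc_castSucc]
    rfl

lemma keyLemma {d : ℕ} : ∀ {S : Set (Fin d → ℝ)}, StairConvex S →
    ∀ {p x : Fin d → ℝ}, p ∈ S → x ∈ S → ∀ (k : Fin d), (∀ j, k < j → p j = x j) →
    ∀ t, p k ≤ t → t ≤ x k → Function.update p k t ∈ S := by
  induction d with
  | zero => intro S _ p x _ _ k; exact k.elim0
  | succ d ih =>
    intro S hS p x hp hx k hagree t ht1 ht2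
    by_cases hk : k = Fin.last d
    · subst hk
      have hpx : p (Fin.last d) ≤ x (Fin.last d) := ht1.trans ht2
      rcases eq_or_lt_of_le hpx with heq | hlt
      · have : t = p (Fin.last d) := le_antisymm (ht2.trans heq.symm.le) ht1
        rw [this, Function.update_eq_self]
        exact hp
      · set l : ℝ := (t - p (Fin.last d)) / (x (Fin.last d) - p (Fin.last d)) with hl
        have hdpos : 0 < x (Fin.last d) - p (Fin.last d) := sub_pos.2 hlt
        have h0 : 0 ≤ l := div_nonneg (sub_nonneg.2 ht1) hdpos.le
        have h1 : l ≤ 1 := by rw [hl, div_le_one hdpos]; linarith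
        have hc : l * (x (Fin.last d) - p (Fin.last d)) = t - p (Fin.last d) :=
          div_mul_cancel₀ _ hdpos.ne'
        have hmem : Function.update p (Fin.last d) t ∈
            segment ℝ p (Fin.snoc (Fin.init p) (x (Fin.last d))) := by
          refine ⟨1 - l, l, by linarith, h0, by ring, ?_⟩
          funext i
          refine Fin.lastCases ?_ (fun i => ?_) i
          · simp only [Pi.add_apply, Pi.smul_apply, smul_eq_mul, Fin.snoc_last,
              Function.update_self]
            linarith [hc]
          · simp only [Pi.add_apply, Pi.smul_apply, smul_eq_mul, Fin.snoc_castSucc,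
              Function.update_of_ne (Fin.castSucc_lt_last i).ne]
            show (1 - l) * p (Fin.castSucc i) + l * p (Fin.castSucc i) = p (Fin.castSucc i)
            ring
        have hsub := hS p hp x hx
        rw [stairPath, if_pos hpx] at hsub
        exact hsub (Or.inl hmem)
    · obtain ⟨k', rfl⟩ : ∃ k', k = Fin.castSucc k' :=
        ⟨k.castPred hk, (Fin.castSucc_castPred _ _).symm⟩
      have hlast : p (Fin.last d) = x (Fin.last d) := hagree _ (Fin.castSucc_lt_last k')
      have hslice := stairConvex_slice hS (p (Fin.last d))
      have hp' : Fin.init p ∈ {y : Fin d → ℝ | Fin.snoc y (p (Fin.last d)) ∈ S} := by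
        simpa [Fin.snoc_init_self] using hp
      have hx' : Fin.init x ∈ {y : Fin d → ℝ | Fin.snoc y (p (Fin.last d)) ∈ S} := by
        rw [Set.mem_setOf_eq, hlast, Fin.snoc_init_self]
        exact hx
      have hres := ih hslice hp' hx' k'
        (fun j hj => hagree (Fin.castSucc j) (by simpa using hj)) t ht1 ht2
      have heq : Fin.snoc (Function.update (Fin.init p) k' t) (p (Fin.last d)) =
          Function.update p (Fin.castSucc k') t := by
        funext i
        refine Fin.lastCases ?_ (fun i => ?_) i
        · rw [Fin.snoc_last, Function.update_of_ne (Fin.castSucc_lt_last k').ne']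
        · rw [Fin.snoc_castSucc]
          rcases eq_or_ne i k' with rfl | hik
          · simp
          · rw [Function.update_of_ne hik,
              Function.update_of_ne (fun h => hik (Fin.castSucc_injective _ h))]
            rfl
      have hres' : Fin.snoc (Function.update (Fin.init p) k' t) (p (Fin.last d)) ∈ S := hres
      rwa [heq] at hres'

lemma chainLemma {d : ℕ} {S : Set (Fin d → ℝ)} (hS : StairConvex S) {p y : Fin d → ℝ}
    (hp : p ∈ S) (hy : y ∈ S) :
    ∀ (c n : ℕ), d ≤ n + c → (∀ j : Fin d, n ≤ (j : ℕ) → y j ≤ p j) →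
      ∃ z ∈ S, (∀ j : Fin d, n ≤ (j : ℕ) → z j = p j) ∧
        ∀ i : Fin d, (i : ℕ) < n → z i = y i := by
  intro c
  induction c with
  | zero =>
    intro n hn _
    exact ⟨y, hy, fun j hj => absurd hj (by have := j.isLt; omega), fun _ _ => rfl⟩
  | succ c ihc =>
    intro n hn hle
    by_cases hdn : d ≤ n
    · exact ⟨y, hy, fun j hj => absurd hj (by have := j.isLt; omega), fun _ _ => rfl⟩
    · obtain ⟨z, hz, h1, h2⟩ := ihc (n+1) (by omega) (fun j hj => hle j (by omega))
      set k : Fin d := ⟨n, by omega⟩ with hk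
      have hzk : z k ≤ p k := by
        rw [h2 k (by simp [hk])]
        exact hle k (le_refl _)
      have hmem := keyLemma hS hz hp k
        (fun j hj => h1 j (by rw [Fin.lt_def] at hj; simpa [hk] using hj)) (p k) hzk le_rfl
      refine ⟨Function.update z k (p k), hmem, fun j hj => ?_, fun i hi => ?_⟩
      · rcases eq_or_ne j k with rfl | hjk
        · rw [Function.update_self]
        · rw [Function.update_of_ne hjk]
          refine h1 j ?_
          have : (j : ℕ) ≠ n := fun h => hjk (Fin.ext (by simp [hk, h]))
          omega
      · have hik : i ≠ k := by
          intro h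
          rw [h] at hi
          simp only [hk] at hi
          omega
        rw [Function.update_of_ne hik]
        exact h2 i (by omega)

/-- `Ulev S δ k` : points whose box-translates supported on coordinates `≥ k` stay in `S`. -/
def Ulev {d : ℕ} (S : Set (Fin d → ℝ)) (δ : ℝ) (k : ℕ) : Set (Fin d → ℝ) :=
  {p | ∀ q : Fin d → ℝ,
    (∀ i : Fin d, (k ≤ (i : ℕ) → q i ∈ Set.Icc 0 δ) ∧ ((i : ℕ) < k → q i = 0)) → p + q ∈ S}

lemma Ulev_zero {d : ℕ} (S : Set (Fin d → ℝ)) (δ : ℝ) : Ulev S δ 0 = shrink S δ := by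
  ext p
  constructor
  · intro h q hq
    exact h q (fun i => ⟨fun _ => hq i, fun hc => absurd hc (by omega)⟩)
  · intro h q hq
    exact h q (fun i => (hq i).1 (Nat.zero_le _))

lemma subset_Ulev_top {d : ℕ} (S : Set (Fin d → ℝ)) (δ : ℝ) : S ⊆ Ulev S δ d := by
  intro p hp q hq
  have : q = 0 := funext fun i => (hq i).2 i.isLt
  rw [this, add_zero]
  exact hp

lemma Ulev_subset {d : ℕ} {S : Set (Fin d → ℝ)} {δ : ℝ} (hδ : 0 ≤ δ) (k : ℕ) :
    Ulev S δ k ⊆ S := by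
  intro p hp
  have := hp 0 (fun i => ⟨fun _ => Set.mem_Icc.2 ⟨le_rfl, hδ⟩, fun _ => rfl⟩)
  rwa [add_zero] at this

lemma stairConvex_Ulev {d : ℕ} {S : Set (Fin d → ℝ)} (hS : StairConvex S) (δ : ℝ) (k : ℕ) :
    StairConvex (Ulev S δ k) :=
  stairConvex_pre hS _

lemma mem_Ulev_of_witness {d : ℕ} {S : Set (Fin d → ℝ)} {δ : ℝ} (hδ : 0 < δ)
    (hS : StairConvex S) (k : Fin d) {p z : Fin d → ℝ}
    (hp : p ∈ Ulev S δ ((k : ℕ)+1)) (hz : z ∈ Ulev S δ ((k : ℕ)+1))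
    (hagree : ∀ j, k < j → z j = p j) (hzk : p k + δ ≤ z k) :
    p ∈ Ulev S δ (k : ℕ) := by
  intro q hq
  have hqk : q k ∈ Set.Icc (0:ℝ) δ := (hq k).1 le_rfl
  have h1 : Function.update p k (p k + q k) ∈ Ulev S δ ((k : ℕ)+1) := by
    refine keyLemma (stairConvex_Ulev hS δ _) hp hz k (fun j hj => (hagree j hj).symm)
      (p k + q k) (by linarith [hqk.1]) (by linarith [hqk.2])
  have h2 := h1 (Function.update q k 0) ?_
  · have : Function.update p k (p k + q k) + Function.update q k 0 = p + q := by
      funext i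
      rcases eq_or_ne i k with rfl | hik
      · simp
      · rw [Pi.add_apply, Pi.add_apply, Function.update_of_ne hik, Function.update_of_ne hik]
    rwa [this] at h2
  · intro i
    constructor
    · intro hi
      have hik : i ≠ k := fun h => by rw [h] at hi; omega
      rw [Function.update_of_ne hik]
      exact (hq i).1 (by omega)
    · intro hi
      rcases eq_or_ne i k with rfl | hik
      · rw [Function.update_self]
      · rw [Function.update_of_ne hik]
        exact (hq i).2 (by omega)

/-- the monotone "top function" in direction `k` of a set `V`. -/
noncomputable def hfun {d : ℕ} (V : Set (Fin d → ℝ)) (k : Fin d) (p : Fin d → ℝ) : ℝ :=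
  sSup ((fun y => y k) '' {y ∈ V | ∀ j, k < j → y j ≤ p j})

lemma hfun_nonneg {d : ℕ} {V : Set (Fin d → ℝ)} (hV : V ⊆ Set.Icc 0 1) (k : Fin d)
    (p : Fin d → ℝ) : 0 ≤ hfun V k p := by
  apply Real.sSup_nonneg
  rintro x ⟨y, ⟨hy, -⟩, rfl⟩
  exact (hV hy).1 k

lemma le_hfun {d : ℕ} {V : Set (Fin d → ℝ)} (hV : V ⊆ Set.Icc 0 1) (k : Fin d)
    {p : Fin d → ℝ} (hp : p ∈ V) : p k ≤ hfun V k p := by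
  refine le_csSup ⟨1, ?_⟩ ⟨p, ⟨hp, fun j _ => le_rfl⟩, rfl⟩
  rintro x ⟨y, ⟨hy, -⟩, rfl⟩
  exact (hV hy).2 k

lemma hfun_mono {d : ℕ} {V : Set (Fin d → ℝ)} (hV : V ⊆ Set.Icc 0 1) (k : Fin d)
    {p p' : Fin d → ℝ} (h : ∀ j, k < j → p j ≤ p' j) : hfun V k p ≤ hfun V k p' := by
  rcases Set.eq_empty_or_nonempty ((fun y => y k) '' {y ∈ V | ∀ j, k < j → y j ≤ p j}) with he | hne
  · rw [hfun, he, Real.sSup_empty]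
    exact hfun_nonneg hV k p'
  · apply csSup_le_csSup ⟨1, ?_⟩ hne
    · rintro x ⟨y, ⟨hy, hyle⟩, rfl⟩
      exact ⟨y, ⟨hy, fun j hj => (hyle j hj).trans (h j hj)⟩, rfl⟩
    · rintro x ⟨y, ⟨hy, -⟩, rfl⟩
      exact (hV hy).2 k

lemma hfun_update {d : ℕ} {V : Set (Fin d → ℝ)} (hV : V ⊆ Set.Icc 0 1) (k : Fin d)
    (p : Fin d → ℝ) (c : ℝ) :
    hfun V k (Function.update p k c) = hfun V k p := by
  refine le_antisymm (hfun_mono hV k fun j hj => ?_) (hfun_mono hV k fun j hj => ?_) <;>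
    rw [Function.update_of_ne (ne_of_gt hj)]

lemma lost_mem_strip {d : ℕ} {S : Set (Fin d → ℝ)} {δ : ℝ} (hδ : 0 < δ)
    (hS : StairConvex S) (hbox : S ⊆ Set.Icc 0 1) (k : Fin d) {p : Fin d → ℝ}
    (hp : p ∈ Ulev S δ ((k : ℕ)+1)) (hnot : p ∉ Ulev S δ (k : ℕ)) :
    p k ≤ hfun (Ulev S δ ((k : ℕ)+1)) k p ∧
      hfun (Ulev S δ ((k : ℕ)+1)) k p ≤ p k + δ := by
  set V := Ulev S δ ((k : ℕ)+1) with hV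
  have hVbox : V ⊆ Set.Icc 0 1 := fun x hx => hbox (Ulev_subset hδ.le _ hx)
  refine ⟨le_hfun hVbox k hp, ?_⟩
  by_contra hlt
  push_neg at hlt
  -- extract a witness with k-th coordinate > p k + δ
  have hne : ((fun y => y k) '' {y ∈ V | ∀ j, k < j → y j ≤ p j}).Nonempty :=
    ⟨p k, p, ⟨hp, fun j _ => le_rfl⟩, rfl⟩
  obtain ⟨v, hv, hvgt⟩ := exists_lt_of_lt_csSup hne hlt
  obtain ⟨y, ⟨hy, hyle⟩, rfl⟩ := hv
  -- raise the coordinates above k of y up to those of p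
  obtain ⟨z, hz, h1, h2⟩ := chainLemma (stairConvex_Ulev hS δ _) hp hy d ((k : ℕ)+1)
    (by omega) (fun j hj => hyle j (by rw [Fin.lt_def]; omega))
  have hzk : p k + δ ≤ z k := by
    rw [h2 k (by omega)]
    exact hvgt.le
  exact hnot (mem_Ulev_of_witness hδ hS k hp hz (fun j hj => h1 j (by rw [Fin.lt_def] at hj; omega)) hzk)

open MeasureTheory in
lemma volume_thin_le {d : ℕ} {C : Set (Fin d → ℝ)} {δ : ℝ} (hδ : 0 < δ) (k : Fin d)
    (hC : NullMeasurableSet C) (hsub : C ⊆ Set.Icc 0 1)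
    (hthin : ∀ p ∈ C, ∀ p' ∈ C, (∀ j, j ≠ k → p j = p' j) → p k - p' k ≤ δ) :
    volume C ≤ ENNReal.ofReal δ := by
  have key : ∀ n : ℕ, 1 ≤ n → volume C ≤ ENNReal.ofReal (δ + 2 / n) := by
    intro n hn
    have hnR : (1:ℝ) ≤ n := by exact_mod_cast hn
    set c : ℝ := δ + 1/n with hc
    have hcpos : 0 < c := by positivity
    have hcδ : δ < c := by
      have h1 : (0:ℝ) < 1/(n:ℝ) := by positivity
      rw [hc]; linarith
    set v : ℕ → (Fin d → ℝ) := fun j i => if i = k then j * c else 0 with hv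
    set T : ℕ → Set (Fin d → ℝ) := fun j => (fun p => (-(v j)) + p) ⁻¹' C with hT
    have hmeas : ∀ j, NullMeasurableSet (T j) :=
      fun j => hC.preimage (measurePreserving_add_left volume _).quasiMeasurePreserving
    have hvol : ∀ j, volume (T j) = volume C :=
      fun j => measure_preimage_add volume _ C
    have hdisj : (↑(Finset.range n) : Set ℕ).Pairwise (Function.onFun Disjoint T) := by
      intro j _ j' _ hne
      rw [Function.onFun, Set.disjoint_left]
      rintro x hx hx'
      have h1 : (-(v j) + x) ∈ C := hx
      have h2 : (-(v j') + x) ∈ C := hx'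
      have hagree : ∀ (a b : ℕ), ∀ i, i ≠ k → (-(v a) + x) i = (-(v b) + x) i := by
        intro a b i hik
        simp [hv, hik]
      have hkval : ∀ a : ℕ, (-(v a) + x) k = x k - a * c := by
        intro a
        simp [hv]
        ring
      rcases lt_or_gt_of_ne hne with h | h
      · have hbd := hthin _ h1 _ h2 (hagree j j')
        rw [hkval, hkval] at hbd
        have : (1:ℝ) ≤ (j':ℝ) - j := by
          have : (j:ℝ) + 1 ≤ j' := by exact_mod_cast h
          linarith
        nlinarith
      · have hbd := hthin _ h2 _ h1 (hagree j' j)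
        rw [hkval, hkval] at hbd
        have : (1:ℝ) ≤ (j:ℝ) - j' := by
          have : (j':ℝ) + 1 ≤ j := by exact_mod_cast h
          linarith
        nlinarith
    set upper : Fin d → ℝ := fun i => if i = k then 1 + n * c else 1 with hupper
    have hsubU : (⋃ j ∈ Finset.range n, T j) ⊆ Set.Icc 0 upper := by
      rintro x hx
      simp only [Set.mem_iUnion] at hx
      obtain ⟨j, hj, hxj⟩ := hx
      have hmem := hsub hxj
      rw [Set.mem_Icc] at hmem ⊢
      have hjn : (j:ℝ) ≤ n := by
        have : j < n := Finset.mem_range.1 hj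
        exact_mod_cast this.le
      constructor <;> intro i <;>
        have h0 := hmem.1 i <;> have h1 := hmem.2 i <;>
        simp only [Pi.add_apply, Pi.neg_apply, Pi.zero_apply, Pi.one_apply] at h0 h1 ⊢
      · rcases eq_or_ne i k with rfl | hik
        · simp only [hv, if_pos rfl, hupper] at h0 ⊢
          nlinarith [hcpos, (Nat.cast_nonneg j : (0:ℝ) ≤ j)]
        · simpa [hv, hik] using h0
      · rcases eq_or_ne i k with rfl | hik
        · simp only [hv, if_pos rfl, hupper, if_pos rfl] at h1 ⊢
          nlinarith
        · simp only [hupper, if_neg hik]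
          simpa [hv, hik] using h1
    have hsum := measure_biUnion_finset₀ (μ := volume)
      (hdisj.mono' fun a b h => h.aedisjoint) (fun j _ => hmeas j)
    have hboxvol : volume (Set.Icc (0 : Fin d → ℝ) upper) = ENNReal.ofReal (1 + n * c) := by
      rw [Real.volume_Icc_pi]
      rw [Finset.prod_eq_single k]
      · simp [hupper]
      · intro i _ hik
        simp [hupper, hik]
      · simp
    have hle1 : (n : ℝ≥0∞) * volume C ≤ ENNReal.ofReal (1 + n * c) := by
      calc (n : ℝ≥0∞) * volume C = ∑ j ∈ Finset.range n, volume (T j) := by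
            simp [hvol, Finset.sum_const, Finset.card_range, nsmul_eq_mul]
        _ = volume (⋃ j ∈ Finset.range n, T j) := hsum.symm
        _ ≤ volume (Set.Icc (0 : Fin d → ℝ) upper) := measure_mono hsubU
        _ = ENNReal.ofReal (1 + n * c) := hboxvol
    have hn0 : (n : ℝ≥0∞) ≠ 0 := Nat.cast_ne_zero.mpr (by omega)
    have hnt : (n : ℝ≥0∞) ≠ ⊤ := ENNReal.natCast_ne_top n
    have hnpos : (0:ℝ) < n := by positivity
    have h2 : volume C ≤ ENNReal.ofReal (1 + n * c) / n :=
      (ENNReal.le_div_iff_mul_le (Or.inl hn0) (Or.inl hnt)).mpr (by rwa [mul_comm])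
    have h3 : ENNReal.ofReal (1 + n * c) / (n : ℝ≥0∞) = ENNReal.ofReal ((1 + n * c)/n) := by
      rw [ENNReal.ofReal_div_of_pos hnpos, ENNReal.ofReal_natCast]
    have h4 : (1 + (n:ℝ) * c)/n ≤ δ + 2/n := by
      have heq : (1 + (n:ℝ) * c)/n = δ + 2/n := by
        rw [hc]
        field_simp
        ring
      exact heq.le
    calc volume C ≤ ENNReal.ofReal (1 + n * c) / n := h2
      _ = ENNReal.ofReal ((1 + n * c)/n) := h3
      _ ≤ ENNReal.ofReal (δ + 2/n) := ENNReal.ofReal_le_ofReal h4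
  refine ENNReal.le_of_forall_pos_le_add fun ε hε _ => ?_
  have hεpos : (0:ℝ) < ε := hε
  obtain ⟨n0, hn0⟩ := exists_nat_ge (2 / (ε:ℝ))
  set n : ℕ := n0 + 1 with hn
  have hnpos : (0:ℝ) < n := by positivity
  have h2n : (2:ℝ)/n ≤ ε := by
    rw [div_le_iff₀ hnpos]
    have : 2/(ε:ℝ) ≤ n := by rw [hn]; push_cast; linarith
    calc (2:ℝ) = (2/ε) * ε := by field_simp
      _ ≤ n * ε := by nlinarith
      _ = ε * n := by ring
  calc volume C ≤ ENNReal.ofReal (δ + 2/n) := key n (by omega)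
    _ ≤ ENNReal.ofReal δ + ENNReal.ofReal (2/n) := ENNReal.ofReal_add_le
    _ ≤ ENNReal.ofReal δ + ε := by
        refine add_le_add_right ?_ _
        rw [← ENNReal.ofReal_coe_nnreal]
        exact ENNReal.ofReal_le_ofReal h2n

open MeasureTheory in
lemma measurePreserving_negk {d : ℕ} (k : Fin d) :
    MeasurePreserving (fun (p : Fin d → ℝ) (i : Fin d) => if i = k then -(p i) else p i)
      volume volume := by
  have h := MeasureTheory.volume_preserving_pi
    (f := fun (i : Fin d) (t : ℝ) => if i = k then -t else t) ?_
  · exact h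
  · intro i
    rcases eq_or_ne i k with rfl | hik
    · simpa using Measure.measurePreserving_neg (volume : Measure ℝ)
    · simp only [hik, if_false]; exact MeasurePreserving.id volume

lemma negk_eq_update {d : ℕ} (k : Fin d) (p : Fin d → ℝ) :
    (fun (i : Fin d) => if i = k then -(p i) else p i) = Function.update p k (-(p k)) := by
  funext i
  rcases eq_or_ne i k with rfl | h
  · simp
  · simp [h, Function.update_of_ne h]

open MeasureTheory in
lemma nullMeasurable_hfun_le {d : ℕ} {V : Set (Fin d → ℝ)} (hV : V ⊆ Set.Icc 0 1) (k : Fin d) :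
    NullMeasurableSet {p : Fin d → ℝ | p k ≤ hfun V k p} := by
  set negk := fun (p : Fin d → ℝ) (i : Fin d) => if i = k then -(p i) else p i with hnegk
  set AU := {x : Fin d → ℝ | 0 ≤ x k + hfun V k x} with hAU
  have hup : IsUpperSet AU := by
    intro x x' hxx' hx
    have h1 : x k ≤ x' k := hxx' k
    have h2 : hfun V k x ≤ hfun V k x' := hfun_mono hV k (fun j _ => hxx' j)
    simp only [hAU, Set.mem_setOf_eq] at *
    linarith
  have hnm : NullMeasurableSet AU := nullMeasurableSet_of_null_frontier hup.null_frontier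
  have heq : {p : Fin d → ℝ | p k ≤ hfun V k p} = negk ⁻¹' AU := by
    ext p
    have e1 : negk p k = -(p k) := by simp [hnegk]
    have e2 : hfun V k (negk p) = hfun V k p := by
      rw [hnegk]
      show hfun V k (fun i => if i = k then -(p i) else p i) = hfun V k p
      rw [negk_eq_update, hfun_update hV]
    simp only [Set.mem_preimage, Set.mem_setOf_eq, hAU, e1, e2]
    constructor <;> intro <;> linarith
  rw [heq]
  exact hnm.preimage (measurePreserving_negk k).quasiMeasurePreserving

open MeasureTheory in
lemma nullMeasurable_hfun_lt {d : ℕ} {V : Set (Fin d → ℝ)} (hV : V ⊆ Set.Icc 0 1) (k : Fin d)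
    (c : ℝ) : NullMeasurableSet {p : Fin d → ℝ | p k + c < hfun V k p} := by
  set negk := fun (p : Fin d → ℝ) (i : Fin d) => if i = k then -(p i) else p i with hnegk
  set AU := {x : Fin d → ℝ | c < x k + hfun V k x} with hAU
  have hup : IsUpperSet AU := by
    intro x x' hxx' hx
    have h1 : x k ≤ x' k := hxx' k
    have h2 : hfun V k x ≤ hfun V k x' := hfun_mono hV k (fun j _ => hxx' j)
    simp only [hAU, Set.mem_setOf_eq] at *
    linarith
  have hnm : NullMeasurableSet AU := nullMeasurableSet_of_null_frontier hup.null_frontier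
  have heq : {p : Fin d → ℝ | p k + c < hfun V k p} = negk ⁻¹' AU := by
    ext p
    have e1 : negk p k = -(p k) := by simp [hnegk]
    have e2 : hfun V k (negk p) = hfun V k p := by
      rw [hnegk]
      show hfun V k (fun i => if i = k then -(p i) else p i) = hfun V k p
      rw [negk_eq_update, hfun_update hV]
    simp only [Set.mem_preimage, Set.mem_setOf_eq, hAU, e1, e2]
    constructor <;> intro <;> linarith
  rw [heq]
  exact hnm.preimage (measurePreserving_negk k).quasiMeasurePreserving

open MeasureTheory in
lemma volume_lost_le {d : ℕ} {S : Set (Fin d → ℝ)} {δ : ℝ} (hδ : 0 < δ)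
    (hS : StairConvex S) (hbox : S ⊆ Set.Icc 0 1) (k : Fin d) :
    volume ((({p : Fin d → ℝ | p k ≤ hfun (Ulev S δ ((k:ℕ)+1)) k p} \
        {p : Fin d → ℝ | p k + δ < hfun (Ulev S δ ((k:ℕ)+1)) k p}) ∩ Set.Icc 0 1)) ≤
      ENNReal.ofReal δ := by
  set V := Ulev S δ ((k:ℕ)+1) with hV
  have hVbox : V ⊆ Set.Icc 0 1 := fun x hx => hbox (Ulev_subset hδ.le _ hx)
  apply volume_thin_le hδ k
  · exact (((nullMeasurable_hfun_le hVbox k).diff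
      (nullMeasurable_hfun_lt hVbox k δ)).inter measurableSet_Icc.nullMeasurableSet)
  · exact Set.inter_subset_right
  · rintro p ⟨⟨hp1, hp2⟩, -⟩ p' ⟨⟨hp1', hp2'⟩, -⟩ hagree
    simp only [Set.mem_setOf_eq, not_lt] at hp1 hp2 hp1' hp2'
    have hfeq : hfun V k p = hfun V k p' :=
      le_antisymm (hfun_mono hVbox k fun j hj => (hagree j (ne_of_gt hj)).le)
        (hfun_mono hVbox k fun j hj => (hagree j (ne_of_gt hj)).ge)
    linarith

lemma exists_lost {d : ℕ} {S : Set (Fin d → ℝ)} {δ : ℝ} (hδ : 0 < δ) {p : Fin d → ℝ}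
    (hp : p ∈ S) :
    p ∈ shrink S δ ∨ ∃ k : Fin d, p ∈ Ulev S δ ((k:ℕ)+1) ∧ p ∉ Ulev S δ (k:ℕ) := by
  have H : ∀ j : ℕ, j ≤ d → p ∈ Ulev S δ j →
      (p ∈ shrink S δ ∨ ∃ k : Fin d, p ∈ Ulev S δ ((k:ℕ)+1) ∧ p ∉ Ulev S δ (k:ℕ)) := by
    intro j
    induction j with
    | zero => intro _ hpj; left; rwa [← Ulev_zero S δ]
    | succ j ih =>
      intro hj hpj
      by_cases h : p ∈ Ulev S δ j
      · exact ih (by omega) h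
      · exact Or.inr ⟨⟨j, by omega⟩, hpj, h⟩
  exact H d le_rfl (subset_Ulev_top S δ hp)

open Classical in
lemma count_lost_le {d m : ℕ} (hm : 2 ≤ m) {S : Set (Fin d → ℝ)} {δ : ℝ} (hδ : 0 < δ)
    (hS : StairConvex S) (k : Fin d) :
    ((uniformGrid d m).filter
        (fun p => p ∈ Ulev S δ ((k:ℕ)+1) ∧ p ∉ Ulev S δ (k:ℕ))).card ≤
      ⌈((m : ℝ) - 1) * δ⌉₊ * m ^ (d - 1) := by
  haveI : NeZero m := ⟨by omega⟩
  have hm1 : (0:ℝ) < (m:ℝ) - 1 := by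
    have : (2:ℝ) ≤ m := by exact_mod_cast hm
    linarith
  set toPt : (Fin d → Fin m) → (Fin d → ℝ) := fun f i => (f i : ℝ) / (m - 1) with htoPt
  have hinj : Function.Injective toPt := by
    intro f g hfg
    funext i
    have h := congr_fun hfg i
    simp only [htoPt] at h
    rw [div_eq_div_iff hm1.ne' hm1.ne'] at h
    have h2 := mul_right_cancel₀ hm1.ne' h
    exact Fin.ext (by exact_mod_cast h2)
  set Q : (Fin d → ℝ) → Prop :=
    fun p => p ∈ Ulev S δ ((k:ℕ)+1) ∧ p ∉ Ulev S δ (k:ℕ) with hQ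
  have himage : (uniformGrid d m).filter Q
      = Finset.image toPt ((Finset.univ).filter (fun f => Q (toPt f))) := by
    rw [uniformGrid, Finset.filter_image]
  rw [himage, Finset.card_image_of_injective _ hinj]
  set s := (Finset.univ : Finset (Fin d → Fin m)).filter (fun f => Q (toPt f)) with hs
  have hmain := Finset.card_le_mul_card_image (f := fun f => Function.update f k (0 : Fin m))
    s (⌈((m : ℝ) - 1) * δ⌉₊) ?_
  · refine hmain.trans ?_
    refine Nat.mul_le_mul_left _ ?_
    -- card of image ≤ m ^ (d-1)
    have hsub : ∀ g ∈ s.image (fun f => Function.update f k (0 : Fin m)), g k = 0 := by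
      intro g hg
      obtain ⟨f, -, rfl⟩ := Finset.mem_image.1 hg
      simp
    calc (s.image (fun f => Function.update f k (0 : Fin m))).card
        ≤ (Finset.univ : Finset ({j : Fin d // j ≠ k} → Fin m)).card := by
          apply Finset.card_le_card_of_injOn (fun g (j : {j : Fin d // j ≠ k}) => g j.1)
            (fun _ _ => Finset.mem_univ _)
          intro g hg g' hg' hgg'
          funext i
          rcases eq_or_ne i k with rfl | hik
          · rw [hsub g hg, hsub g' hg']
          · exact congr_fun hgg' ⟨i, hik⟩
      _ = m ^ (d - 1) := by
          rw [Finset.card_univ, Fintype.card_fun, Fintype.card_fin]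
          congr 1
          rw [Fintype.card_subtype_compl, Fintype.card_subtype_eq, Fintype.card_fin]
  · -- fiber bound
    intro g hg
    set F := s.filter (fun f => Function.update f k (0 : Fin m) = g) with hF
    have hFinj : Set.InjOn (fun f : Fin d → Fin m => f k) ↑F := by
      intro f hf f' hf' hff'
      have h1 : Function.update f k (0 : Fin m) = g := (Finset.mem_filter.1 hf).2
      have h2 : Function.update f' k (0 : Fin m) = g := (Finset.mem_filter.1 hf').2
      funext i
      rcases eq_or_ne i k with rfl | hik
      · exact hff'
      · have := congr_fun (h1.trans h2.symm) i
        rwa [Function.update_of_ne hik, Function.update_of_ne hik] at this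
    rw [← Finset.card_image_of_injOn hFinj]
    set T := F.image (fun f => f k) with hT
    rcases T.eq_empty_or_nonempty with he | hne
    · rw [he]; simp
    · set a := T.min' hne with ha
      set b := T.max' hne with hb
      obtain ⟨fa, hfa, hfak⟩ := Finset.mem_image.1 (T.min'_mem hne)
      obtain ⟨fb, hfb, hfbk⟩ := Finset.mem_image.1 (T.max'_mem hne)
      have hfaF := Finset.mem_filter.1 hfa
      have hfbF := Finset.mem_filter.1 hfb
      have hQa : Q (toPt fa) := (Finset.mem_filter.1 hfaF.1).2
      have hQb : Q (toPt fb) := (Finset.mem_filter.1 hfbF.1).2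
      have hagree : ∀ i, i ≠ k → fa i = fb i := by
        intro i hik
        have := congr_fun (hfaF.2.trans hfbF.2.symm) i
        rwa [Function.update_of_ne hik, Function.update_of_ne hik] at this
      -- key: the two real coordinates differ by < δ
      have hkey : ((b : ℕ) : ℝ) - ((a : ℕ) : ℝ) < ((m : ℝ) - 1) * δ := by
        by_contra hcon
        push_neg at hcon
        -- then toPt fa k + δ ≤ toPt fb k and witness gives contradiction
        have hwit : toPt fa k + δ ≤ toPt fb k := by
          have hdiv : δ ≤ (((b:ℕ):ℝ) - ((a:ℕ):ℝ))/((m:ℝ)-1) := by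
            rw [le_div_iff₀ hm1]
            linarith [hcon]
          have hsplit : (((b:ℕ):ℝ))/((m:ℝ)-1) - (((a:ℕ):ℝ))/((m:ℝ)-1)
              = (((b:ℕ):ℝ) - ((a:ℕ):ℝ))/((m:ℝ)-1) := (sub_div _ _ _).symm
          simp only [htoPt, hfak, hfbk]
          linarith
        have hagree' : ∀ j, k < j → toPt fb j = toPt fa j := by
          intro j hj
          simp only [htoPt]
          rw [hagree j (ne_of_gt hj)]
        exact hQa.2 (mem_Ulev_of_witness hδ hS k hQa.1 hQb.1 hagree' hwit)
      have hab : (a : ℕ) ≤ (b : ℕ) := T.min'_le _ (T.max'_mem hne)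
      have hcast : (((b : ℕ) - (a : ℕ) : ℕ) : ℝ) < ((m : ℝ) - 1) * δ := by
        rw [Nat.cast_sub hab]
        exact hkey
      have hlt : (b : ℕ) - (a : ℕ) < ⌈((m : ℝ) - 1) * δ⌉₊ := Nat.lt_ceil.2 hcast
      calc T.card = (T.image Fin.val).card :=
            (Finset.card_image_of_injective _ Fin.val_injective).symm
        _ ≤ (Finset.Icc (a : ℕ) (b : ℕ)).card := by
            apply Finset.card_le_card
            intro x hx
            obtain ⟨v, hv, rfl⟩ := Finset.mem_image.1 hx
            rw [Finset.mem_Icc]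
            exact ⟨T.min'_le v hv, T.le_max' v hv⟩
        _ = (b : ℕ) + 1 - (a : ℕ) := Nat.card_Icc _ _
        _ ≤ ⌈((m : ℝ) - 1) * δ⌉₊ := by omega

open MeasureTheory in
open Classical in
/-- The erosion of a stair-convex `S ⊆ [0,1]^d` by `[0,δ]^d` is stair-convex, loses at
most `d·δ` in volume, and at most `d·⌈(m-1)δ⌉·m^(d-1)` points of the uniform grid. -/
theorem shrink_stairConvex_volume_grid (d m : ℕ) (hd : 1 ≤ d) (hm : 2 ≤ m)
    (S : Set (Fin d → ℝ)) (hS : S ⊆ Set.Icc 0 1) (hsc : StairConvex S)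
    (δ : ℝ) (hδ : 0 < δ) :
    StairConvex (shrink S δ) ∧
      MeasureTheory.volume S ≤
        MeasureTheory.volume (shrink S δ) + ENNReal.ofReal (d * δ) ∧
      ((uniformGrid d m).filter (fun p => p ∈ S)).card ≤
        ((uniformGrid d m).filter (fun p => p ∈ shrink S δ)).card +
          d * ⌈((m : ℝ) - 1) * δ⌉₊ * m ^ (d - 1) := by
  refine ⟨?_, ?_, ?_⟩
  · exact stairConvex_pre hsc (fun q => ∀ i : Fin d, q i ∈ Set.Icc 0 δ)
  · set Ck : Fin d → Set (Fin d → ℝ) := fun k =>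
      ({p | p k ≤ hfun (Ulev S δ ((k:ℕ)+1)) k p} \
       {p | p k + δ < hfun (Ulev S δ ((k:ℕ)+1)) k p}) ∩ Set.Icc 0 1 with hCk
    have hcover : S ⊆ shrink S δ ∪ ⋃ k : Fin d, Ck k := by
      intro p hp
      rcases exists_lost hδ hp with h | ⟨k, h1, h2⟩
      · exact Or.inl h
      · refine Or.inr (Set.mem_iUnion.2 ⟨k, ?_⟩)
        obtain ⟨ha, hb⟩ := lost_mem_strip hδ hsc hS k h1 h2
        exact ⟨⟨ha, not_lt.2 hb⟩, hS hp⟩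
    calc volume S ≤ volume (shrink S δ ∪ ⋃ k : Fin d, Ck k) := measure_mono hcover
      _ ≤ volume (shrink S δ) + volume (⋃ k : Fin d, Ck k) := measure_union_le _ _
      _ ≤ volume (shrink S δ) + ∑ k : Fin d, volume (Ck k) := by
          exact add_le_add_right (measure_iUnion_fintype_le _ _) _
      _ ≤ volume (shrink S δ) + ∑ k : Fin d, ENNReal.ofReal δ := by
          refine add_le_add_right (Finset.sum_le_sum fun k _ => ?_) _
          exact volume_lost_le hδ hsc hS k
      _ = volume (shrink S δ) + ENNReal.ofReal (d * δ) := by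
          rw [Finset.sum_const, Finset.card_univ, Fintype.card_fin, nsmul_eq_mul,
            ENNReal.ofReal_mul (by positivity : (0:ℝ) ≤ d), ENNReal.ofReal_natCast]
  · set G := uniformGrid d m with hG
    have hsubset : G.filter (fun p => p ∈ S) ⊆
        (G.filter (fun p => p ∈ shrink S δ)) ∪
          Finset.univ.biUnion (fun k : Fin d =>
            G.filter (fun p => p ∈ Ulev S δ ((k:ℕ)+1) ∧ p ∉ Ulev S δ (k:ℕ))) := by
      intro p hp
      rw [Finset.mem_filter] at hp
      rcases exists_lost hδ hp.2 with h | ⟨k, h1, h2⟩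
      · exact Finset.mem_union.2 (Or.inl (Finset.mem_filter.2 ⟨hp.1, h⟩))
      · exact Finset.mem_union.2 (Or.inr (Finset.mem_biUnion.2
          ⟨k, Finset.mem_univ _, Finset.mem_filter.2 ⟨hp.1, h1, h2⟩⟩))
    calc (G.filter (fun p => p ∈ S)).card
        ≤ ((G.filter (fun p => p ∈ shrink S δ)) ∪
            Finset.univ.biUnion (fun k : Fin d =>
              G.filter (fun p => p ∈ Ulev S δ ((k:ℕ)+1) ∧ p ∉ Ulev S δ (k:ℕ)))).card :=
          Finset.card_le_card hsubset
      _ ≤ (G.filter (fun p => p ∈ shrink S δ)).card +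
            (Finset.univ.biUnion (fun k : Fin d =>
              G.filter (fun p => p ∈ Ulev S δ ((k:ℕ)+1) ∧ p ∉ Ulev S δ (k:ℕ)))).card :=
          Finset.card_union_le _ _
      _ ≤ (G.filter (fun p => p ∈ shrink S δ)).card +
            ∑ k : Fin d, (G.filter
              (fun p => p ∈ Ulev S δ ((k:ℕ)+1) ∧ p ∉ Ulev S δ (k:ℕ))).card :=
          add_le_add_right (Finset.card_biUnion_le) _
      _ ≤ (G.filter (fun p => p ∈ shrink S δ)).card +
            ∑ _k : Fin d, ⌈((m : ℝ) - 1) * δ⌉₊ * m ^ (d - 1) :=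
          add_le_add_right (Finset.sum_le_sum fun k _ => count_lost_le hm hδ hsc k) _
      _ = (G.filter (fun p => p ∈ shrink S δ)).card +
            d * ⌈((m : ℝ) - 1) * δ⌉₊ * m ^ (d - 1) := by
          rw [Finset.sum_const, Finset.card_univ, Fintype.card_fin, smul_eq_mul, mul_assoc]
end
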